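/- Let d1 ≤ d2 be positive integers, let S be a ℂ-linear subspace (Submodule) of Matrix (Fin d1) (Fin d2) ℂ, and let r be a natural number such that every matrix X ∈ S has rank X ≤ r. Then the dimension of S satisfies Module.finrank ℂ S ≤ r · d2. -/

import Mathlib

open Matrix Polynomial Module

lemma my_rank_submatrix_le {m n p q : Type*} [Fintype m] [Fintype n] [Fintype p] [Fintype q]
    [DecidableEq m] [DecidableEq n]
    (M : Matrix m n ℂ) (f : p → m) (g : q → n) : (M.submatrix f g).rank ≤ M.rank := by
  have h1 : M.submatrix f g = (Matrix.of fun i i2 => if f i = i2 then (1:ℂ) else 0) *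
      (M * (Matrix.of fun j2 j => if g j = j2 then (1:ℂ) else 0)) := by
    ext i j
    simp [Matrix.mul_apply, ite_mul, mul_ite]
  rw [h1]
  exact (Matrix.rank_mul_le_right _ _).trans (Matrix.rank_mul_le_left _ _)


lemma my_rank_reindex {m n p q : Type*} [Fintype m] [Fintype n] [Fintype p] [Fintype q]
    [DecidableEq m] [DecidableEq n] [DecidableEq p] [DecidableEq q]
    (M : Matrix m n ℂ) (e1 : p ≃ m) (e2 : q ≃ n) : (M.submatrix e1 e2).rank = M.rank := by
  refine le_antisymm (my_rank_submatrix_le M e1 e2) ?_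
  have h : M = (M.submatrix e1 e2).submatrix e1.symm e2.symm := by
    ext i j; simp
  conv_lhs => rw [h]
  exact my_rank_submatrix_le _ _ _


lemma exists_normal_form {m n s : ℕ} (X : Matrix (Fin m) (Fin n) ℂ) (hs : X.rank = s)
    (hm : s ≤ m) (hn : s ≤ n) :
    ∃ (P : Matrix (Fin m) (Fin m) ℂ) (Q : Matrix (Fin n) (Fin n) ℂ),
      IsUnit P.det ∧ IsUnit Q.det ∧
      (P * X * Q).submatrix
        ((finSumFinEquiv : Fin s ⊕ Fin (m - s) ≃ Fin (s + (m - s))).trans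
          (finCongr (Nat.add_sub_cancel' hm)))
        ((finSumFinEquiv : Fin s ⊕ Fin (n - s) ≃ Fin (s + (n - s))).trans
          (finCongr (Nat.add_sub_cancel' hn)))
      = fromBlocks (1 : Matrix (Fin s) (Fin s) ℂ) 0 0 0 := by
  classical
  set e1 := ((finSumFinEquiv : Fin s ⊕ Fin (m - s) ≃ Fin (s + (m - s))).trans
          (finCongr (Nat.add_sub_cancel' hm))) with he1
  set e2 := ((finSumFinEquiv : Fin s ⊕ Fin (n - s) ≃ Fin (s + (n - s))).trans
          (finCongr (Nat.add_sub_cancel' hn))) with he2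
  set f : (Fin n → ℂ) →ₗ[ℂ] (Fin m → ℂ) := Matrix.toLin (Pi.basisFun ℂ (Fin n)) (Pi.basisFun ℂ (Fin m)) X with hf
  -- complement of the kernel
  obtain ⟨U, hU⟩ := Submodule.exists_isCompl (LinearMap.ker f)
  obtain ⟨C, hC⟩ := Submodule.exists_isCompl (LinearMap.range f)
  have hrange : finrank ℂ (LinearMap.range f) = s := by
    rw [← hs, Matrix.rank]
    congr 1
  have hkerrange : finrank ℂ (LinearMap.range f) + finrank ℂ (LinearMap.ker f) = n := by
    have := LinearMap.finrank_range_add_finrank_ker f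
    simpa [Module.finrank_fintype_fun_eq_card] using this
  have hUdim : finrank ℂ U = s := by
    have := Submodule.finrank_add_eq_of_isCompl hU
    rw [Module.finrank_fintype_fun_eq_card] at this
    simp only [Fintype.card_fin] at this
    omega
  have hCdim : finrank ℂ C = m - s := by
    have := Submodule.finrank_add_eq_of_isCompl hC
    rw [Module.finrank_fintype_fun_eq_card] at this
    simp only [Fintype.card_fin] at this
    omega
  have hkdim : finrank ℂ (LinearMap.ker f) = n - s := by omega
  let fU : U →ₗ[ℂ] LinearMap.range f :=
    (f.domRestrict U).codRestrict (LinearMap.range f) (fun x => ⟨x, rfl⟩)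
  have hfU : ∀ x : U, (fU x : Fin m → ℂ) = f x := fun x => rfl
  have hfUbij : Function.Bijective fU := by
    constructor
    · intro x y hxy
      have h1 : f (x - y : U) = 0 := by
        have := congrArg (Subtype.val) hxy
        rw [hfU, hfU] at this
        simp [map_sub, this]
      have h2 : ((x - y : U) : Fin n → ℂ) ∈ LinearMap.ker f ⊓ U :=
        ⟨h1, Submodule.coe_mem _⟩
      rw [hU.inf_eq_bot] at h2
      have h3 : (x - y : U) = 0 := by
        apply Subtype.ext
        simpa using h2
      rwa [sub_eq_zero] at h3
    · rintro ⟨y, x, rfl⟩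
      obtain ⟨k, u, hk, hu, rfl⟩ : ∃ k u, k ∈ LinearMap.ker f ∧ u ∈ U ∧ k + u = x := by
        have hx : x ∈ (LinearMap.ker f) ⊔ U := by rw [hU.sup_eq_top]; trivial
        obtain ⟨k, hk, u, hu, h⟩ := Submodule.mem_sup.mp hx
        exact ⟨k, u, hk, hu, h⟩
      refine ⟨⟨u, hu⟩, ?_⟩
      apply Subtype.ext
      rw [hfU]
      simp only [map_add, LinearMap.mem_ker.mp hk, zero_add]
  let eU : U ≃ₗ[ℂ] LinearMap.range f := LinearEquiv.ofBijective fU hfUbij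
  let bU : Basis (Fin s) ℂ U := Module.finBasisOfFinrankEq ℂ U hUdim
  let bK : Basis (Fin (n - s)) ℂ (LinearMap.ker f) := Module.finBasisOfFinrankEq ℂ _ hkdim
  let bR : Basis (Fin s) ℂ (LinearMap.range f) := bU.map eU
  let bC : Basis (Fin (m - s)) ℂ C := Module.finBasisOfFinrankEq ℂ C hCdim
  let bV : Basis (Fin s ⊕ Fin (n - s)) ℂ (Fin n → ℂ) :=
    (bU.prod bK).map (Submodule.prodEquivOfIsCompl _ _ hU.symm)
  let bW : Basis (Fin s ⊕ Fin (m - s)) ℂ (Fin m → ℂ) :=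
    (bR.prod bC).map (Submodule.prodEquivOfIsCompl _ _ hC)
  let bV' : Basis (Fin n) ℂ (Fin n → ℂ) := bV.reindex e2
  let bW' : Basis (Fin m) ℂ (Fin m → ℂ) := bW.reindex e1
  refine ⟨bW'.toMatrix (Pi.basisFun ℂ (Fin m)), (Pi.basisFun ℂ (Fin n)).toMatrix bV', ?_, ?_, ?_⟩
  · have : Invertible (bW'.toMatrix (Pi.basisFun ℂ (Fin m))) :=
      bW'.invertibleToMatrix (Pi.basisFun ℂ (Fin m))
    exact Matrix.isUnit_det_of_invertible _
  · have : Invertible ((Pi.basisFun ℂ (Fin n)).toMatrix bV') :=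
      (Pi.basisFun ℂ (Fin n)).invertibleToMatrix bV'
    exact Matrix.isUnit_det_of_invertible _
  · have hX : X = LinearMap.toMatrix (Pi.basisFun ℂ (Fin n)) (Pi.basisFun ℂ (Fin m)) f :=
      (LinearMap.toMatrix_toLin _ _ X).symm
    have hPXQ : bW'.toMatrix (Pi.basisFun ℂ (Fin m)) * X * (Pi.basisFun ℂ (Fin n)).toMatrix bV'
        = LinearMap.toMatrix bV' bW' f := by
      rw [hX]
      exact basis_toMatrix_mul_linearMap_toMatrix_mul_basis_toMatrix bV'
        (Pi.basisFun ℂ (Fin n)) bW' (Pi.basisFun ℂ (Fin m)) f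
    rw [hPXQ]
    ext i j
    rw [Matrix.submatrix_apply, LinearMap.toMatrix_apply]
    have h1 : bV' (e2 j) = bV j := by simp [bV']
    have h2 : ∀ x, bW'.repr x (e1 i) = bW.repr x i := by intro x; simp [bW']
    rw [h1, h2]
    cases j with
    | inl j' =>
      have hfb : f (bV (Sum.inl j')) = bW (Sum.inl j') := by
        simp only [bV, bW, Basis.map_apply, Basis.prod_apply]
        simp [Submodule.coe_prodEquivOfIsCompl', hfU, bR, eU]
      rw [hfb, Basis.repr_self]
      cases i with
      | inl i' => simp [Matrix.fromBlocks, Matrix.one_apply, Finsupp.single_apply, eq_comm]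
      | inr i' => simp [Matrix.fromBlocks, Finsupp.single_apply]
    | inr j' =>
      have hfb : f (bV (Sum.inr j')) = 0 := by
        simp only [bV, Basis.map_apply, Basis.prod_apply]
        simp only [Submodule.coe_prodEquivOfIsCompl']
        have : (bK j' : Fin n → ℂ) ∈ LinearMap.ker f := (bK j').2
        simp [LinearMap.mem_ker.mp this]
      rw [hfb]
      cases i <;> simp [Matrix.fromBlocks]

lemma key_blocks {s p q : ℕ} (A : Matrix (Fin s) (Fin s) ℂ) (B : Matrix (Fin s) (Fin q) ℂ)
    (C : Matrix (Fin p) (Fin s) ℂ) (D : Matrix (Fin p) (Fin q) ℂ)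
    (h : ∀ t : ℂ, (fromBlocks (1 + t • A) (t • B) (t • C) (t • D)).rank ≤ s) :
    D = 0 ∧ C * B = 0 := by
  classical
  set Ap : Matrix (Fin s) (Fin s) ℂ[X] := A.map Polynomial.C with hAp
  set Bp : Matrix (Fin s) (Fin q) ℂ[X] := B.map Polynomial.C with hBp
  set Cp : Matrix (Fin p) (Fin s) ℂ[X] := C.map Polynomial.C with hCp
  set g : ℂ[X] := (1 + (X : ℂ[X]) • Ap).det with hg
  set H : Matrix (Fin p) (Fin q) ℂ[X] := Cp * (1 + (X : ℂ[X]) • Ap).adjugate * Bp with hH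
  have hmap : ∀ t : ℂ, (1 + (X : ℂ[X]) • Ap).map (eval t) = 1 + t • A := by
    intro t
    ext k l
    simp only [Matrix.map_apply, Matrix.add_apply, Matrix.smul_apply, smul_eq_mul,
      Matrix.one_apply, hAp]
    by_cases hkl : k = l <;> simp [hkl] <;> ring
  have hgeval : ∀ t : ℂ, g.eval t = (1 + t • A).det := by
    intro t
    rw [hg, ← hmap t]
    exact (RingHom.map_det (evalRingHom t) _)
  have hg0 : g.eval 0 = 1 := by simp [hgeval]
  have hgne : g ≠ 0 := fun hcon => by simp [hcon] at hg0
  have hHeval : ∀ t : ℂ, (H.map (eval t)) = C * (1 + t • A).adjugate * B := by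
    intro t
    have h1 : H.map ⇑(evalRingHom t) = C * (1 + t • A).adjugate * B := by
      rw [hH, Matrix.map_mul, Matrix.map_mul]
      have h2 := RingHom.map_adjugate (evalRingHom t) (1 + (X : ℂ[X]) • Ap)
      have h3 : (1 + (X : ℂ[X]) • Ap).adjugate.map ⇑(evalRingHom t)
          = (1 + t • A).adjugate := by
        rw [show (1 + (X : ℂ[X]) • Ap).adjugate.map ⇑(evalRingHom t)
            = (evalRingHom t).mapMatrix (1 + (X : ℂ[X]) • Ap).adjugate from rfl, h2]
        congr 1
        rw [show (evalRingHom t).mapMatrix (1 + (X : ℂ[X]) • Ap)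
            = (1 + (X : ℂ[X]) • Ap).map ⇑(evalRingHom t) from rfl]
        rw [show ⇑(evalRingHom t) = eval t from rfl, hmap t]
      rw [h3]
      congr 1
      · congr 1
        ext k l; simp [hCp, Matrix.map_apply]
      · ext k l; simp [hBp, Matrix.map_apply]
    rw [show (eval t : ℂ[X] → ℂ) = ⇑(evalRingHom t) from rfl]
    exact h1
  have key : ∀ (i : Fin p) (j : Fin q), D i j = 0 ∧ (C * B) i j = 0 := by
    intro i j
    set ρ : Fin s ⊕ Unit → Fin s ⊕ Fin p := Sum.map id (fun _ => i) with hρ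
    set γ : Fin s ⊕ Unit → Fin s ⊕ Fin q := Sum.map id (fun _ => j) with hγ
    have hdet : ∀ t : ℂ,
        ((fromBlocks (1 + t • A) (t • B) (t • C) (t • D)).submatrix ρ γ).det = 0 := by
      intro t
      by_contra hne
      have hunit : IsUnit ((fromBlocks (1 + t • A) (t • B) (t • C) (t • D)).submatrix ρ γ) :=
        (Matrix.isUnit_iff_isUnit_det _).mpr (isUnit_iff_ne_zero.mpr hne)
      have hrk := Matrix.rank_of_isUnit _ hunit
      have hle := my_rank_submatrix_le (fromBlocks (1 + t • A) (t • B) (t • C) (t • D)) ρ γ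
      rw [hrk] at hle
      simp only [Fintype.card_sum, Fintype.card_fin, Fintype.card_unit] at hle
      have := h t
      omega
    have hminor : ∀ t : ℂ, (fromBlocks (1 + t • A) (t • B) (t • C) (t • D)).submatrix ρ γ
        = fromBlocks (1 + t • A) (t • (B.submatrix id (fun _ : Unit => j)))
            (t • (C.submatrix (fun _ : Unit => i) id))
            (t • (D.submatrix (fun _ : Unit => i) (fun _ : Unit => j))) := by
      intro t
      ext a b
      cases a <;> cases b <;> simp [hρ, hγ, Matrix.fromBlocks, Matrix.submatrix_apply]
    set F : ℂ[X] := (X : ℂ[X]) * Polynomial.C (D i j) * g - (X : ℂ[X])^2 * H i j with hF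
    have hFeval : ∀ t : ℂ, (1 + t • A).det ≠ 0 → F.eval t = 0 := by
      intro t hdt
      have hu : IsUnit (1 + t • A).det := isUnit_iff_ne_zero.mpr hdt
      haveI : Invertible (1 + t • A) := (1 + t • A).invertibleOfIsUnitDet hu
      have h0 := hdet t
      rw [hminor t, Matrix.det_fromBlocks₁₁] at h0
      set W : Matrix Unit Unit ℂ := (t • (D.submatrix (fun _ : Unit => i) (fun _ : Unit => j)))
          - t • (C.submatrix (fun _ : Unit => i) id) * ⅟(1 + t • A)
            * (t • (B.submatrix id (fun _ : Unit => j))) with hW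
      have hWdet : W.det = W () () := Matrix.det_unique W
      rw [hWdet] at h0
      have hinvmat : C * (1 + t • A)⁻¹ * B
          = Ring.inverse (1 + t • A).det • (C * (1 + t • A).adjugate * B) := by
        rw [Matrix.inv_def, Matrix.mul_smul, Matrix.smul_mul]
      have hWval : W () () = t * D i j
          - t^2 * (Ring.inverse (1 + t • A).det * (C * (1 + t • A).adjugate * B) i j) := by
        rw [hW, Matrix.invOf_eq_nonsing_inv]
        simp only [Matrix.sub_apply, Matrix.smul_apply, Matrix.submatrix_apply, smul_eq_mul]
        congr 1
        have : (C.submatrix (fun _ : Unit => i) id) * (1 + t • A)⁻¹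
            * (B.submatrix id (fun _ : Unit => j))
            = (C * (1 + t • A)⁻¹ * B).submatrix (fun _ : Unit => i) (fun _ : Unit => j) := by
          ext a b
          simp only [Matrix.mul_apply, Matrix.submatrix_apply, id]
        calc (t • (C.submatrix (fun _ : Unit => i) id) * (1 + t • A)⁻¹
            * (t • (B.submatrix id (fun _ : Unit => j)))) () ()
            = t^2 * ((C.submatrix (fun _ : Unit => i) id) * (1 + t • A)⁻¹
              * (B.submatrix id (fun _ : Unit => j))) () () := by
              simp only [Matrix.smul_mul, Matrix.mul_smul, Matrix.smul_apply, smul_eq_mul]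
              ring
          _ = t^2 * (Ring.inverse (1 + t • A).det * (C * (1 + t • A).adjugate * B) i j) := by
              rw [this]
              simp only [Matrix.submatrix_apply]
              rw [hinvmat]
              simp only [Matrix.smul_apply, smul_eq_mul]
      rw [hWval] at h0
      have h3 : t * D i j
          - t^2 * (Ring.inverse (1 + t • A).det * (C * (1 + t • A).adjugate * B) i j) = 0 := by
        rcases mul_eq_zero.mp h0 with h' | h'
        · exact absurd h' hdt
        · exact h'
      have hinv : (1 + t • A).det * Ring.inverse (1 + t • A).det = 1 :=
        Ring.mul_inverse_cancel _ hu
      have hFe : F.eval t = t * D i j * (1 + t • A).det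
          - t^2 * (C * (1 + t • A).adjugate * B) i j := by
        rw [hF]
        simp only [Polynomial.eval_sub, Polynomial.eval_mul, Polynomial.eval_pow,
          Polynomial.eval_X, Polynomial.eval_C, hgeval]
        congr 1
        rw [show (H i j).eval t = (H.map (eval t)) i j from rfl, hHeval t]
      rw [hFe]
      linear_combination (1 + t • A).det * h3
        + t^2 * ((C * (1 + t • A).adjugate * B) i j) * hinv
    have hFzero : F = 0 := by
      apply Polynomial.eq_zero_of_infinite_isRoot
      have hfin := Polynomial.finite_setOf_isRoot hgne
      have hinf : ({t : ℂ | g.IsRoot t}ᶜ : Set ℂ).Infinite := hfin.infinite_compl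
      apply hinf.mono
      intro t ht
      simp only [Set.mem_compl_iff, Set.mem_setOf_eq, IsRoot] at ht ⊢
      exact hFeval t (by rw [← hgeval t]; exact ht)
    have hfac : (X : ℂ[X]) * (Polynomial.C (D i j) * g - (X : ℂ[X]) * H i j) = 0 := by
      rw [← hFzero, hF]; ring
    have h6 : Polynomial.C (D i j) * g - (X : ℂ[X]) * H i j = 0 :=
      (mul_eq_zero.mp hfac).resolve_left Polynomial.X_ne_zero
    have hD : D i j = 0 := by
      have := congrArg (eval 0) h6
      simpa [hg0] using this
    have h7 : (X : ℂ[X]) * H i j = 0 := by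
      rw [hD] at h6
      simpa using h6.symm
    have h8 : H i j = 0 := (mul_eq_zero.mp h7).resolve_left Polynomial.X_ne_zero
    have hCB : (C * B) i j = 0 := by
      have h9 : (H.map (eval 0)) i j = 0 := by
        simp only [Matrix.map_apply, h8, Polynomial.eval_zero]
      rw [hHeval 0] at h9
      simpa [Matrix.adjugate_one] using h9
    exact ⟨hD, hCB⟩
  constructor <;> ext i j
  · exact (key i j).1
  · simpa using (key i j).2

set_option maxHeartbeats 1000000 in
set_option synthInstance.maxHeartbeats 400000 in
theorem stmt4 {d1 d2 : ℕ} (h1 : 0 < d1) (h2 : 0 < d2) (h12 : d1 ≤ d2)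
    (S : Submodule ℂ (Matrix (Fin d1) (Fin d2) ℂ)) (r : ℕ)
    (hr : ∀ X ∈ S, Matrix.rank X ≤ r) :
    Module.finrank ℂ S ≤ r * d2 := by
  classical
  -- the maximal rank in S
  set Rset : Set ℕ := (fun X : Matrix (Fin d1) (Fin d2) ℂ => X.rank) '' S with hRset
  have hRne : Rset.Nonempty := ⟨Matrix.rank (0 : Matrix (Fin d1) (Fin d2) ℂ), 0, S.zero_mem, rfl⟩
  have hbdd : BddAbove Rset := ⟨r, by rintro k ⟨X, hX, rfl⟩; exact hr X hX⟩
  obtain ⟨X0, hX0S, hX0rank⟩ := Nat.sSup_mem hRne hbdd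
  set s : ℕ := sSup Rset with hs
  have hsr : s ≤ r := by rw [← hX0rank]; exact hr X0 hX0S
  have hmax : ∀ X ∈ S, X.rank ≤ s := fun X hX => le_csSup hbdd ⟨X, hX, rfl⟩
  have hsd1 : s ≤ d1 := by rw [← hX0rank]; exact X0.rank_le_height
  have hsd2 : s ≤ d2 := by rw [← hX0rank]; exact X0.rank_le_width
  obtain ⟨P, Q, hP, hQ, hPXQ⟩ := exists_normal_form X0 hX0rank hsd1 hsd2
  haveI : Invertible P := P.invertibleOfIsUnitDet hP
  haveI : Invertible Q := Q.invertibleOfIsUnitDet hQ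
  set e1 : Fin s ⊕ Fin (d1 - s) ≃ Fin d1 :=
    (finSumFinEquiv.trans (finCongr (Nat.add_sub_cancel' hsd1))) with he1
  set e2 : Fin s ⊕ Fin (d2 - s) ≃ Fin d2 :=
    (finSumFinEquiv.trans (finCongr (Nat.add_sub_cancel' hsd2))) with he2
  set Φf : Matrix (Fin d1) (Fin d2) ℂ → Matrix (Fin s ⊕ Fin (d1 - s)) (Fin s ⊕ Fin (d2 - s)) ℂ :=
    fun M => (P * M * Q).submatrix e1 e2 with hΦf
  have hΦadd : ∀ M N, Φf (M + N) = Φf M + Φf N := by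
    intro M N; ext i j; simp [hΦf, Matrix.mul_add, Matrix.add_mul]
  have hΦsmul : ∀ (c : ℂ) M, Φf (c • M) = c • Φf M := by
    intro c M; ext i j; simp [hΦf, Matrix.smul_mul, Matrix.mul_smul]
  have hΦrank : ∀ M, (Φf M).rank = M.rank := by
    intro M
    rw [hΦf]
    simp only
    rw [my_rank_reindex _ e1 e2, Matrix.rank_mul_eq_left_of_isUnit_det Q (P * M) hQ,
      Matrix.rank_mul_eq_right_of_isUnit_det P M hP]
  have hΦinj : ∀ M, Φf M = 0 → M = 0 := by
    intro M hM
    have hz : P * M * Q = 0 := by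
      ext i j
      have := congrFun (congrFun hM (e1.symm i)) (e2.symm j)
      simpa [hΦf] using this
    have h3 : ⅟P * (P * M * Q) * ⅟Q = M := by
      rw [Matrix.mul_assoc P M Q, ← Matrix.mul_assoc (⅟P) P (M * Q), invOf_mul_self,
        Matrix.one_mul, Matrix.mul_assoc M Q (⅟Q), mul_invOf_self, Matrix.mul_one]
    rw [hz] at h3
    simpa using h3.symm
  have hΦX0 : Φf X0 = Matrix.fromBlocks 1 0 0 0 := hPXQ
  -- block behaviour
  have hdecomp : ∀ (Y : Matrix (Fin d1) (Fin d2) ℂ) (t : ℂ),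
      Φf (X0 + t • Y) = Matrix.fromBlocks (1 + t • (Φf Y).toBlocks₁₁) (t • (Φf Y).toBlocks₁₂)
        (t • (Φf Y).toBlocks₂₁) (t • (Φf Y).toBlocks₂₂) := by
    intro Y t
    rw [hΦadd, hΦsmul, hΦX0]
    ext (i | i) (j | j) <;>
      simp [Matrix.fromBlocks, Matrix.toBlocks₁₁, Matrix.toBlocks₁₂, Matrix.toBlocks₂₁,
        Matrix.toBlocks₂₂]
  have hkey : ∀ Y ∈ S, (Φf Y).toBlocks₂₂ = 0 ∧ (Φf Y).toBlocks₂₁ * (Φf Y).toBlocks₁₂ = 0 := by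
    intro Y hY
    apply key_blocks
    intro t
    rw [← hdecomp Y t, hΦrank]
    exact hmax _ (S.add_mem hX0S (S.smul_mem t hY))
  have hpolar : ∀ Y ∈ S, ∀ Z ∈ S,
      (Φf Z).toBlocks₂₁ * (Φf Y).toBlocks₁₂ + (Φf Y).toBlocks₂₁ * (Φf Z).toBlocks₁₂ = 0 := by
    intro Y hY Z hZ
    have h1 := (hkey _ (S.add_mem hZ hY)).2
    rw [hΦadd] at h1
    have hb : (Φf Z + Φf Y).toBlocks₁₂ = (Φf Z).toBlocks₁₂ + (Φf Y).toBlocks₁₂ := rfl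
    have hc : (Φf Z + Φf Y).toBlocks₂₁ = (Φf Z).toBlocks₂₁ + (Φf Y).toBlocks₂₁ := rfl
    rw [hb, hc, Matrix.add_mul, Matrix.mul_add, Matrix.mul_add] at h1
    rw [(hkey _ hZ).2, (hkey _ hY).2] at h1
    rw [show (0 : Matrix (Fin (d1 - s)) (Fin (d2 - s)) ℂ) + (Φf Z).toBlocks₂₁ * (Φf Y).toBlocks₁₂
        + ((Φf Y).toBlocks₂₁ * (Φf Z).toBlocks₁₂ + 0)
        = (Φf Z).toBlocks₂₁ * (Φf Y).toBlocks₁₂ + (Φf Y).toBlocks₂₁ * (Φf Z).toBlocks₁₂ by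
      rw [zero_add, add_zero]] at h1
    exact h1
  -- linear block extraction maps
  let Φl : Matrix (Fin d1) (Fin d2) ℂ →ₗ[ℂ]
      Matrix (Fin s ⊕ Fin (d1 - s)) (Fin s ⊕ Fin (d2 - s)) ℂ :=
    { toFun := Φf, map_add' := hΦadd, map_smul' := hΦsmul }
  let bl11 : Matrix (Fin s ⊕ Fin (d1 - s)) (Fin s ⊕ Fin (d2 - s)) ℂ →ₗ[ℂ]
      Matrix (Fin s) (Fin s) ℂ :=
    { toFun := Matrix.toBlocks₁₁, map_add' := fun _ _ => rfl, map_smul' := fun _ _ => rfl }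
  let bl12 : Matrix (Fin s ⊕ Fin (d1 - s)) (Fin s ⊕ Fin (d2 - s)) ℂ →ₗ[ℂ]
      Matrix (Fin s) (Fin (d2 - s)) ℂ :=
    { toFun := Matrix.toBlocks₁₂, map_add' := fun _ _ => rfl, map_smul' := fun _ _ => rfl }
  let g0 : S →ₗ[ℂ] (Matrix (Fin s) (Fin s) ℂ × Matrix (Fin s) (Fin (d2 - s)) ℂ) :=
    (bl11.comp (Φl.comp S.subtype)).prod (bl12.comp (Φl.comp S.subtype))
  set K : Submodule ℂ S := LinearMap.ker g0 with hK
  -- the dot-product functionals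
  let dotl : (Fin s → ℂ) →ₗ[ℂ] Module.Dual ℂ (Fin s → ℂ) :=
    { toFun := fun w => ∑ k, w k • (LinearMap.proj k : (Fin s → ℂ) →ₗ[ℂ] ℂ)
      map_add' := fun w w' => by simp [add_smul, Finset.sum_add_distrib]
      map_smul' := fun c w => by simp [Finset.smul_sum, smul_smul] }
  have hdotl : ∀ w v : Fin s → ℂ, dotl w v = ∑ k, w k * v k := by
    intro w v
    simp [dotl]
  have hdotl_inj : ∀ w, dotl w = 0 → w = 0 := by
    intro w hw
    funext k
    have h5 := LinearMap.congr_fun hw (Pi.single k 1)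
    rw [hdotl] at h5
    simpa [Pi.single_apply, Finset.sum_ite_eq] using h5
  set Gset : Set (Module.Dual ℂ (Fin s → ℂ)) :=
    Set.range (fun zi : K × Fin (d1 - s) =>
      dotl (fun k => (Φf (zi.1 : S).1).toBlocks₂₁ zi.2 k)) with hGset
  set L : Submodule ℂ (Module.Dual ℂ (Fin s → ℂ)) := Submodule.span ℂ Gset with hL
  -- membership of rows of K-elements in L
  have hrowL : ∀ (Z : K) (i : Fin (d1 - s)),
      dotl (fun k => (Φf (Z : S).1).toBlocks₂₁ i k) ∈ L :=
    fun Z i => Submodule.subset_span ⟨(Z, i), rfl⟩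
  -- b-blocks of K-elements vanish
  have hg0K : ∀ Z : K, g0 (Z : S) = 0 := fun Z => Z.2
  have hKb : ∀ Z : K, (Φf (Z : S).1).toBlocks₁₂ = 0 :=
    fun Z => congrArg Prod.snd (hg0K Z)
  have hKa : ∀ Z : K, (Φf (Z : S).1).toBlocks₁₁ = 0 :=
    fun Z => congrArg Prod.fst (hg0K Z)
  -- columns of b-blocks lie in the coannihilator of L
  have hcol : ∀ (Y : S) (j : Fin (d2 - s)),
      (fun k => (Φf Y.1).toBlocks₁₂ k j) ∈ L.dualCoannihilator := by
    intro Y j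
    rw [Submodule.mem_dualCoannihilator]
    intro φ hφ
    have hker : L ≤ LinearMap.ker
        (Module.Dual.eval ℂ (Fin s → ℂ) (fun k => (Φf Y.1).toBlocks₁₂ k j)) := by
      rw [hL, Submodule.span_le]
      rintro _ ⟨⟨Z, i⟩, rfl⟩
      simp only [SetLike.mem_coe, LinearMap.mem_ker, Module.Dual.eval_apply]
      rw [hdotl]
      have hzero : (Φf (Z : S).1).toBlocks₂₁ * (Φf Y.1).toBlocks₁₂ = 0 := by
        have hp := hpolar Y.1 Y.2 (Z : S).1 (Z : S).2
        rw [hKb Z] at hp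
        simpa using hp
      have := congrFun (congrFun hzero i) j
      rw [Matrix.mul_apply] at this
      simpa using this
    exact hker hφ
  -- the refined projection map
  let hmap2 : S →ₗ[ℂ] (Matrix (Fin s) (Fin s) ℂ × (Fin (d2 - s) → L.dualCoannihilator)) :=
    { toFun := fun Y => ((Φf Y.1).toBlocks₁₁,
        fun j => ⟨fun k => (Φf Y.1).toBlocks₁₂ k j, hcol Y j⟩)
      map_add' := fun Y Z => by
        have hcoe : ((Y + Z : S) : Matrix (Fin d1) (Fin d2) ℂ) = ↑Y + ↑Z := rfl
        refine Prod.ext ?_ ?_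
        · show (Φf ((Y + Z : S) : Matrix (Fin d1) (Fin d2) ℂ)).toBlocks₁₁
            = (Φf ↑Y).toBlocks₁₁ + (Φf ↑Z).toBlocks₁₁
          rw [hcoe, hΦadd]
          rfl
        · funext j
          apply Subtype.ext
          show (fun k => (Φf ((Y + Z : S) : Matrix (Fin d1) (Fin d2) ℂ)).toBlocks₁₂ k j)
            = fun k => (Φf (↑Y : Matrix (Fin d1) (Fin d2) ℂ)).toBlocks₁₂ k j
              + (Φf (↑Z : Matrix (Fin d1) (Fin d2) ℂ)).toBlocks₁₂ k j
          rw [hcoe, hΦadd]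
          rfl
      map_smul' := fun c Y => by
        have hcoe : ((c • Y : S) : Matrix (Fin d1) (Fin d2) ℂ) = c • (↑Y : Matrix (Fin d1) (Fin d2) ℂ) := rfl
        simp only [RingHom.id_apply]
        refine Prod.ext ?_ ?_
        · show (Φf ((c • Y : S) : Matrix (Fin d1) (Fin d2) ℂ)).toBlocks₁₁
            = c • (Φf ↑Y).toBlocks₁₁
          rw [hcoe, hΦsmul]
          rfl
        · funext j
          apply Subtype.ext
          show (fun k => (Φf ((c • Y : S) : Matrix (Fin d1) (Fin d2) ℂ)).toBlocks₁₂ k j)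
            = fun k => c • (Φf (↑Y : Matrix (Fin d1) (Fin d2) ℂ)).toBlocks₁₂ k j
          rw [hcoe, hΦsmul]
          rfl }
  have hker_eq : LinearMap.ker hmap2 = K := by
    ext Y
    constructor
    · intro hY
      have hY' : hmap2 Y = 0 := hY
      have ha : (Φf (↑Y : Matrix (Fin d1) (Fin d2) ℂ)).toBlocks₁₁ = 0 := congrArg Prod.fst hY'
      have hb : (Φf (↑Y : Matrix (Fin d1) (Fin d2) ℂ)).toBlocks₁₂ = 0 := by
        ext k j
        have h5 := congrFun (congrArg Prod.snd hY') j
        have h6 := congrArg Subtype.val h5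
        exact congrFun h6 k
      show g0 Y = 0
      exact Prod.ext ha hb
    · intro hY
      have hY' : g0 Y = 0 := hY
      have ha : (Φf (↑Y : Matrix (Fin d1) (Fin d2) ℂ)).toBlocks₁₁ = 0 := congrArg Prod.fst hY'
      have hb : (Φf (↑Y : Matrix (Fin d1) (Fin d2) ℂ)).toBlocks₁₂ = 0 := congrArg Prod.snd hY'
      show hmap2 Y = 0
      refine Prod.ext ha ?_
      funext j
      apply Subtype.ext
      funext k
      exact congrFun (congrFun hb k) j
  -- the injection of K into row-space functionals
  let cmap : K →ₗ[ℂ] (Fin (d1 - s) → L) :=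
    { toFun := fun Z => fun i => ⟨dotl (fun k => (Φf (Z : S).1).toBlocks₂₁ i k), hrowL Z i⟩
      map_add' := fun Z Z' => by
        funext i
        apply Subtype.ext
        show dotl (fun k => (Φf (((Z + Z' : K) : S) : Matrix (Fin d1) (Fin d2) ℂ)).toBlocks₂₁ i k)
          = dotl (fun k => (Φf ((Z : S) : Matrix (Fin d1) (Fin d2) ℂ)).toBlocks₂₁ i k)
            + dotl (fun k => (Φf ((Z' : S) : Matrix (Fin d1) (Fin d2) ℂ)).toBlocks₂₁ i k)
        rw [show (((Z + Z' : K) : S) : Matrix (Fin d1) (Fin d2) ℂ)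
          = ((Z : S) : Matrix (Fin d1) (Fin d2) ℂ) + ((Z' : S) : Matrix (Fin d1) (Fin d2) ℂ)
          from rfl, hΦadd, ← map_add]
        congr 1
      map_smul' := fun c Z => by
        funext i
        apply Subtype.ext
        simp only [RingHom.id_apply]
        show dotl (fun k => (Φf (((c • Z : K) : S) : Matrix (Fin d1) (Fin d2) ℂ)).toBlocks₂₁ i k)
          = c • dotl (fun k => (Φf ((Z : S) : Matrix (Fin d1) (Fin d2) ℂ)).toBlocks₂₁ i k)
        rw [show (((c • Z : K) : S) : Matrix (Fin d1) (Fin d2) ℂ)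
          = c • ((Z : S) : Matrix (Fin d1) (Fin d2) ℂ) from rfl, hΦsmul, ← dotl.map_smul]
        congr 1 }
  have hcmap_ker : LinearMap.ker cmap = ⊥ := by
    rw [Submodule.eq_bot_iff]
    intro Z hZ
    rw [LinearMap.mem_ker] at hZ
    have hc : (Φf (Z : S).1).toBlocks₂₁ = 0 := by
      ext i k
      have h5 := congrFun hZ i
      have h6 := congrArg Subtype.val h5
      have h7 := hdotl_inj _ h6
      exact congrFun h7 k
    have hd : (Φf (Z : S).1).toBlocks₂₂ = 0 := (hkey _ (Z : S).2).1
    have hΦ0 : Φf (Z : S).1 = 0 := by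
      rw [← Matrix.fromBlocks_toBlocks (Φf (Z : S).1), hKa Z, hKb Z, hc, hd]
      ext (i | i) (j | j) <;> simp [Matrix.fromBlocks]
    have := hΦinj _ hΦ0
    apply Subtype.ext
    apply Subtype.ext
    exact this
  have hcmap_inj : Function.Injective cmap := fun a b hab => by
    have h : a - b ∈ LinearMap.ker cmap :=
      LinearMap.mem_ker.mpr ((map_sub cmap a b).trans (by rw [hab, sub_self]))
    rw [hcmap_ker, Submodule.mem_bot] at h
    exact sub_eq_zero.mp h
  -- dimension count
  have hfin : Module.finrank ℂ S
      = Module.finrank ℂ (LinearMap.range hmap2) + Module.finrank ℂ (LinearMap.ker hmap2) :=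
    (LinearMap.finrank_range_add_finrank_ker hmap2).symm
  set w : ℕ := Module.finrank ℂ L.dualCoannihilator with hw
  set ℓ : ℕ := Module.finrank ℂ L with hℓ
  have hlw : ℓ + w = s := by
    have := Subspace.finrank_add_finrank_dualCoannihilator_eq L
    rwa [Module.finrank_fintype_fun_eq_card, Fintype.card_fin] at this
  have hrange_le : Module.finrank ℂ (LinearMap.range hmap2) ≤ s * s + (d2 - s) * w := by
    have h6 := Submodule.finrank_le (LinearMap.range hmap2)
    rw [Module.finrank_prod, Module.finrank_matrix, Module.finrank_pi_fintype] at h6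
    simp only [Finset.sum_const, Finset.card_univ, Fintype.card_fin, smul_eq_mul,
      Module.finrank_self, mul_one] at h6
    rw [hw]
    exact h6
  have hker_le : Module.finrank ℂ (LinearMap.ker hmap2) ≤ (d1 - s) * ℓ := by
    rw [hker_eq]
    have h7 := LinearMap.finrank_le_finrank_of_injective hcmap_inj
    rw [Module.finrank_pi_fintype] at h7
    simp only [Finset.sum_const, Finset.card_univ, Fintype.card_fin, smul_eq_mul] at h7
    rw [hℓ]
    exact h7
  rw [hfin]
  have hstep : (d1 - s) * ℓ ≤ (d2 - s) * ℓ := Nat.mul_le_mul_right ℓ (by omega)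
  have hfinal : s * s + (d2 - s) * w + (d2 - s) * ℓ = s * d2 := by
    have h8 : (d2 - s) * w + (d2 - s) * ℓ = (d2 - s) * s := by
      rw [← mul_add]
      rw [show w + ℓ = s by omega]
    rw [Nat.add_assoc, h8, ← add_mul]
    rw [show s + (d2 - s) = d2 by omega]
    exact Nat.mul_comm d2 s
  have : s * d2 ≤ r * d2 := Nat.mul_le_mul_right d2 hsr
  omega
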